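/- arXiv:1709.03825 — 3 statements merged into one kernel-verified Lean document; each statement's English description precedes it below -/
import Mathlib

section
/- Let (T,M) be a complete Noetherian local ring, C a countable set of prime ideals of T with M ∉ C, and D a countable subset of T. If I is an ideal of T not contained in any single member of C, then I is not contained in the union of the cosets r + P over all P ∈ C and r ∈ D. -/
open IsLocalRing

/-- In a Noetherian local ring, every ideal is closed in the adic topology:
if `x ∈ J + M^n` for all `n`, then `x ∈ J`. -/
lemma aux_mem_of_forall_mem_sup_pow {T : Type} [CommRing T] [IsLocalRing T]
    [IsNoetherianRing T] (J : Ideal T) (x : T)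
    (h : ∀ n : ℕ, x ∈ J ⊔ maximalIdeal T ^ n) : x ∈ J := by
  by_cases hJ : J = ⊤
  · simp [hJ]
  · let π := Ideal.Quotient.mk J
    have hsurj : Function.Surjective π := Ideal.Quotient.mk_surjective
    haveI : Nontrivial (T ⧸ J) := Ideal.Quotient.nontrivial_iff.mpr hJ
    haveI : IsLocalRing (T ⧸ J) := IsLocalRing.of_surjective' π hsurj
    have hmap : (maximalIdeal T).map π ≤ maximalIdeal (T ⧸ J) := by
      rw [Ideal.map_le_iff_le_comap]
      haveI : ((maximalIdeal (T ⧸ J)).comap π).IsMaximal :=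
        Ideal.comap_isMaximal_of_surjective π hsurj
      exact le_of_eq (IsLocalRing.eq_maximalIdeal this).symm
    have hx : ∀ n : ℕ, π x ∈ maximalIdeal (T ⧸ J) ^ n := by
      intro n
      obtain ⟨a, ha, b, hb, hab⟩ := Submodule.mem_sup.mp (h n)
      have hπ : π x = π b := by
        rw [← hab, map_add, Ideal.Quotient.eq_zero_iff_mem.mpr ha, zero_add]
      rw [hπ]
      have : π b ∈ ((maximalIdeal T) ^ n).map π := Ideal.mem_map_of_mem π hb
      rw [Ideal.map_pow] at this
      exact Ideal.pow_right_mono hmap n this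
    have hbot : (⨅ n : ℕ, maximalIdeal (T ⧸ J) ^ n) = ⊥ :=
      Ideal.iInf_pow_eq_bot_of_isLocalRing _ (Ideal.IsMaximal.ne_top (maximalIdeal.isMaximal _))
    have : π x ∈ (⊥ : Ideal (T ⧸ J)) := by
      rw [← hbot, Ideal.mem_iInf]; exact hx
    rw [Ideal.mem_bot] at this
    exact Ideal.Quotient.eq_zero_iff_mem.mp this

/-- Heitmann's generalized countable prime avoidance: let `(T,M)` be a complete Noetherian
local ring, `C` a countable set of primes of `T` not containing `M`, and `D` a countable
subset of `T`.  If `I` is an ideal of `T` contained in no single member of `C`, then `I`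
is not contained in the union of the cosets `r + P` for `P ∈ C`, `r ∈ D`. -/
theorem stmt11 (T : Type) [CommRing T] [IsLocalRing T] [IsNoetherianRing T]
    [IsAdicComplete (maximalIdeal T) T]
    (C : Set (PrimeSpectrum T)) (hC : C.Countable)
    (hM : ∀ P ∈ C, P.asIdeal ≠ maximalIdeal T)
    (D : Set T) (hD : D.Countable)
    (I : Ideal T) (hI : ∀ P ∈ C, ¬ I ≤ P.asIdeal) :
    ¬ (I : Set T) ⊆ ⋃ (P ∈ C) (r ∈ D), {x : T | x - r ∈ P.asIdeal} := by
  intro hsub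
  set Mx := maximalIdeal T with hMx
  -- reduce to the case where `C ×ˢ D` is nonempty
  by_cases hne : (C ×ˢ D).Nonempty
  swap
  · -- the union is empty, but `0 ∈ I`
    have h0 := hsub I.zero_mem
    simp only [Set.mem_iUnion] at h0
    obtain ⟨P, hP, r, hr, -⟩ := h0
    exact hne ⟨(P, r), Set.mk_mem_prod hP hr⟩
  -- enumerate `C ×ˢ D`
  obtain ⟨f, hf⟩ := (hC.prod hD).exists_eq_range hne
  set P : ℕ → PrimeSpectrum T := fun n => (f n).1 with hPdef
  set r : ℕ → T := fun n => (f n).2 with hrdef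
  have hfC : ∀ n, P n ∈ C := by
    intro n
    have : f n ∈ C ×ˢ D := hf ▸ Set.mem_range_self n
    exact this.1
  have hfD : ∀ n, r n ∈ D := by
    intro n
    have : f n ∈ C ×ˢ D := hf ▸ Set.mem_range_self n
    exact this.2
  haveI hprime : ∀ n, (P n).asIdeal.IsPrime := fun n => (P n).isPrime
  -- `M^c` is never contained in any `P n`
  have hMP : ∀ n (c : ℕ), ¬ Mx ^ c ≤ (P n).asIdeal := by
    intro n c hle
    have hMle : Mx ≤ (P n).asIdeal := by
      have := (hprime n).pow_le_iff (n := c) (I := Mx)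
      by_cases hc : c = 0
      · subst hc
        simp only [pow_zero, Ideal.one_eq_top, top_le_iff] at hle
        exact absurd hle (hprime n).ne_top
      · exact ((hprime n).pow_le_iff hc).mp hle
    have hPle : (P n).asIdeal ≤ Mx := IsLocalRing.le_maximalIdeal (hprime n).ne_top
    exact hM (P n) (hfC n) (le_antisymm hPle hMle)
  -- existence of elements of `I ∩ M^c` outside `P n`
  have hex : ∀ n (c : ℕ), ∃ t, t ∈ I ∧ t ∈ Mx ^ c ∧ t ∉ (P n).asIdeal := by
    intro n c
    have : ¬ I * Mx ^ c ≤ (P n).asIdeal := by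
      rw [(hprime n).mul_le]
      push_neg
      exact ⟨hI (P n) (hfC n), hMP n c⟩
    obtain ⟨t, htI, htP⟩ := Set.not_subset.mp this
    have := Ideal.mul_le_inf htI
    exact ⟨t, this.1, this.2, htP⟩
  -- the invariant of the construction
  set Good : ℕ → T → ℕ → Prop :=
    fun n x c => x ∈ I ∧ n ≤ c ∧ ∀ i < n, x - r i ∉ (P i).asIdeal ⊔ Mx ^ c with hGooddef
  -- the inductive step
  have step : ∀ (n : ℕ) (p : T × ℕ), ∃ q : T × ℕ, Good n p.1 p.2 →
      Good (n + 1) q.1 q.2 ∧ q.1 - p.1 ∈ Mx ^ p.2 ∧ p.2 ≤ q.2 := by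
    intro n p
    by_cases hg : Good n p.1 p.2
    swap
    · exact ⟨p, fun h => absurd h hg⟩
    obtain ⟨hxI, hnc, hav⟩ := hg
    obtain ⟨x, c⟩ := p
    dsimp only at *
    -- first find `x'` avoiding all the primes `P i`, `i ≤ n`
    have key : ∃ x', x' ∈ I ∧ x' - x ∈ Mx ^ c ∧ ∀ i < n + 1, x' - r i ∉ (P i).asIdeal := by
      by_cases hxr : x - r n ∈ (P n).asIdeal
      · obtain ⟨t, htI, htM, htP⟩ := hex n c
        refine ⟨x + t, I.add_mem hxI htI, by simpa using htM, ?_⟩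
        intro i hi
        rcases Nat.lt_succ_iff_lt_or_eq.mp hi with hi | hi
        · intro hmem
          apply hav i hi
          have : x - r i = (x + t - r i) - t := by ring
          rw [this]
          exact Submodule.sub_mem _ (Ideal.mem_sup_left hmem) (Ideal.mem_sup_right htM)
        · subst hi
          intro hmem
          apply htP
          have : t = (x + t - r i) - (x - r i) := by ring
          rw [this]
          exact Submodule.sub_mem _ hmem hxr
      · refine ⟨x, hxI, by simp, ?_⟩
        intro i hi
        rcases Nat.lt_succ_iff_lt_or_eq.mp hi with hi | hi
        · intro hmem
          exact hav i hi (Ideal.mem_sup_left hmem)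
        · subst hi; exact hxr
    obtain ⟨x', hx'I, hx'x, hx'av⟩ := key
    -- choose exponents separating `x' - r i` from `P i`
    have hsep : ∀ i : ℕ, ∃ k : ℕ, i < n + 1 → x' - r i ∉ (P i).asIdeal ⊔ Mx ^ k := by
      intro i
      by_cases hi : i < n + 1
      · by_contra hcon
        push_neg at hcon
        exact hx'av i hi (aux_mem_of_forall_mem_sup_pow _ _ (fun k => (hcon k).2))
      · exact ⟨0, fun h => absurd h hi⟩
    choose k hk using hsep
    set c' : ℕ := max (max c (n + 1)) ((Finset.range (n + 1)).sup k) with hc'def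
    refine ⟨(x', c'), fun _ => ⟨⟨hx'I, ?_, ?_⟩, hx'x, ?_⟩⟩
    · exact le_trans (le_max_right c (n + 1)) (le_max_left _ _)
    · intro i hi hmem
      apply hk i hi
      have hki : k i ≤ c' := le_trans (Finset.le_sup (Finset.mem_range.mpr hi)) (le_max_right _ _)
      exact (sup_le_sup_left (α := Ideal T) (Ideal.pow_le_pow_right hki) _) hmem
    · exact le_trans (le_max_left c (n + 1)) (le_max_left _ _)
  choose F hF using step
  -- the sequence
  set seq : ℕ → T × ℕ := fun n => Nat.rec ((0 : T), 0) (fun n p => F n p) n with hseqdef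
  have hseq0 : seq 0 = ((0 : T), 0) := rfl
  have hseqS : ∀ n, seq (n + 1) = F n (seq n) := fun n => rfl
  set x : ℕ → T := fun n => (seq n).1 with hxdef
  set c : ℕ → ℕ := fun n => (seq n).2 with hcdef
  have hGood : ∀ n, Good n (x n) (c n) := by
    intro n
    induction n with
    | zero => exact ⟨I.zero_mem, le_refl 0, fun i hi => absurd hi (Nat.not_lt_zero i)⟩
    | succ n ih =>
      have := hF n (seq n) ih
      rw [← hseqS n] at this
      exact this.1
  have hdiff : ∀ n, x (n + 1) - x n ∈ Mx ^ (c n) := by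
    intro n
    have := hF n (seq n) (hGood n)
    rw [← hseqS n] at this
    exact this.2.1
  have hcmono : ∀ n, c n ≤ c (n + 1) := by
    intro n
    have := hF n (seq n) (hGood n)
    rw [← hseqS n] at this
    exact this.2.2
  have hcmono' : ∀ {m n : ℕ}, m ≤ n → c m ≤ c n := by
    intro m n hmn
    induction hmn with
    | refl => exact le_refl _
    | step h ih => exact le_trans ih (hcmono _)
  have hnc : ∀ n, n ≤ c n := fun n => (hGood n).2.1
  -- Cauchy property
  have hcauchy : ∀ n m, n ≤ m → x m - x n ∈ Mx ^ (c n) := by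
    intro n m hnm
    induction hnm with
    | refl => simp
    | @step m h ih =>
      have : x (m + 1) - x n = (x (m + 1) - x m) + (x m - x n) := by ring
      rw [this]
      exact Submodule.add_mem _ (Ideal.pow_le_pow_right (hcmono' h) (hdiff m)) ih
  -- apply completeness
  have hprec : ∀ {m n : ℕ}, m ≤ n →
      x m ≡ x n [SMOD (Mx ^ m • ⊤ : Submodule T T)] := by
    intro m n hmn
    rw [SModEq.sub_mem]
    have heq : (Mx ^ m • ⊤ : Submodule T T) = Mx ^ m := by rw [smul_eq_mul, Ideal.mul_top]
    rw [heq]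
    have hmem : x n - x m ∈ Mx ^ m := Ideal.pow_le_pow_right (hnc m) (hcauchy m n hmn)
    have hneg : x m - x n = -(x n - x m) := by ring
    rw [hneg]
    exact Submodule.neg_mem _ hmem
  obtain ⟨L, hL⟩ := IsPrecomplete.prec (IsAdicComplete.toIsPrecomplete (I := Mx)) @hprec
  have hLmem : ∀ n, x n - L ∈ Mx ^ n := by
    intro n
    have := hL n
    rw [SModEq.sub_mem] at this
    have heq : (Mx ^ n • ⊤ : Submodule T T) = Mx ^ n := by
      rw [smul_eq_mul, Ideal.mul_top]
    rwa [heq] at this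
  -- `L ∈ I`
  have hLI : L ∈ I := by
    apply aux_mem_of_forall_mem_sup_pow I L
    intro n
    have : L = x n - (x n - L) := by ring
    rw [this]
    exact Submodule.sub_mem _ (Ideal.mem_sup_left (hGood n).1) (Ideal.mem_sup_right (hLmem n))
  -- `L - x n ∈ Mx ^ (c n)`
  have hLx : ∀ n, L - x n ∈ Mx ^ (c n) := by
    intro n
    have h1 : x (max n (c n)) - x n ∈ Mx ^ (c n) := hcauchy n _ (le_max_left _ _)
    have h2 : x (max n (c n)) - L ∈ Mx ^ (c n) := by
      have := hLmem (max n (c n))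
      exact Ideal.pow_le_pow_right (le_max_right _ _) this
    have : L - x n = (x (max n (c n)) - x n) - (x (max n (c n)) - L) := by ring
    rw [this]
    exact Submodule.sub_mem _ h1 h2
  -- `L` avoids all cosets
  have hLav : ∀ i : ℕ, L - r i ∉ (P i).asIdeal := by
    intro i hmem
    have hG := (hGood (i + 1)).2.2 i (Nat.lt_succ_self i)
    apply hG
    have : x (i + 1) - r i = (L - r i) + (x (i + 1) - L) := by ring
    rw [this]
    refine Submodule.add_mem _ (Ideal.mem_sup_left hmem) (Ideal.mem_sup_right ?_)
    have h1 : x (i + 1) - L ∈ Mx ^ (c (i + 1)) := by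
      have : x (i + 1) - L = -(L - x (i + 1)) := by ring
      rw [this]
      exact Submodule.neg_mem _ (hLx (i + 1))
    exact h1
  -- contradiction
  have hLU := hsub hLI
  simp only [Set.mem_iUnion] at hLU
  obtain ⟨Q, hQ, s, hs, hLs⟩ := hLU
  have : (Q, s) ∈ C ×ˢ D := Set.mk_mem_prod hQ hs
  rw [hf] at this
  obtain ⟨i, hi⟩ := this
  apply hLav i
  have hP : P i = Q := by show (f i).1 = Q; rw [hi]
  have hr : r i = s := by show (f i).2 = s; rw [hi]
  rw [hP, hr]
  exact hLs
end

section
/- Every Noetherian local unique factorization domain of dimension at most 3 is catenary. -/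
open IsLocalRing

/-- A chain of primes indexed by `Fin (n+1)` is saturated if each step is a covering
relation in `Spec`. -/
def IsSaturatedChain {R : Type} [CommRing R] {n : ℕ} (f : Fin (n + 1) → PrimeSpectrum R) : Prop :=
  ∀ i : Fin n, f i.castSucc ⋖ f i.succ

/-- A ring is catenary if any two saturated chains of primes with the same endpoints have
the same length. -/
def IsCatenary (R : Type) [CommRing R] : Prop :=
  ∀ (n m : ℕ) (f : Fin (n + 1) → PrimeSpectrum R) (g : Fin (m + 1) → PrimeSpectrum R),
    IsSaturatedChain f → IsSaturatedChain g → f 0 = g 0 →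
    f (Fin.last n) = g (Fin.last m) → n = m

section Akizuki

variable {R : Type} [CommRing R]

/-- A Noetherian module killed by a maximal ideal is Artinian. -/
lemma myArtinianOfTorsion {N : Type} [AddCommGroup N] [Module R N] (M : Ideal R)
    (hM : M.IsMaximal) [IsNoetherian R N] (h : M • (⊤ : Submodule R N) = ⊥) :
    IsArtinian R N := by
  haveI := hM
  have htor : Module.IsTorsionBySet R N (M : Set R) := by
    intro x a
    have : (a : R) • x ∈ M • (⊤ : Submodule R N) := Submodule.smul_mem_smul a.2 Submodule.mem_top
    rwa [h, Submodule.mem_bot] at this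
  letI : Module (R ⧸ M) N := htor.module
  haveI : IsNoetherian (R ⧸ M) N := isNoetherian_of_tower R ‹IsNoetherian R N›
  letI : Field (R ⧸ M) := Ideal.Quotient.field M
  haveI : Module.Finite (R ⧸ M) N := ⟨IsNoetherian.noetherian ⊤⟩
  haveI : IsArtinian (R ⧸ M) N := isArtinian_of_fg_of_artinian' 
  let e : Submodule R N → Submodule (R ⧸ M) N := fun p =>
    { carrier := p
      add_mem' := fun ha hb => p.add_mem ha hb
      zero_mem' := p.zero_mem
      smul_mem' := by
        intro c x hx
        obtain ⟨r, rfl⟩ := Ideal.Quotient.mk_surjective c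
        show (Ideal.Quotient.mk M r) • x ∈ (p : Set N)
        rw [htor.mk_smul]
        exact p.smul_mem r hx }
  have he : ∀ p q : Submodule R N, p < q → e p < e q := by
    intro p q hpq
    have h1 : e p ≤ e q := fun y hy => hpq.le hy
    have h2 : e p ≠ e q := by
      intro heq
      apply hpq.ne
      ext y
      exact SetLike.ext_iff.1 heq y
    exact lt_of_le_of_ne h1 h2
  exact ⟨Subrelation.wf (fun {a b} hab => he a b hab) (InvImage.wf e wellFounded_lt)⟩

/-- Mini Akizuki: a Noetherian module killed by a power of a maximal ideal is Artinian. -/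
lemma myArtinianOfPow (M : Ideal R) (hM : M.IsMaximal) :
    ∀ (k : ℕ) (N : Type) [AddCommGroup N] [Module R N] [IsNoetherian R N],
      M ^ k • (⊤ : Submodule R N) = ⊥ → IsArtinian R N := by
  intro k
  induction k with
  | zero =>
    intro N _ _ _ h
    rw [pow_zero, Ideal.one_eq_top, Submodule.top_smul] at h
    haveI : Subsingleton N := by
      refine subsingleton_of_forall_eq 0 fun x => ?_
      have : x ∈ (⊥ : Submodule R N) := h ▸ Submodule.mem_top
      simpa using this
    haveI : Finite N := Finite.of_subsingleton
    exact isArtinian_of_finite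
  | succ k ih =>
    intro N _ _ _ h
    set S : Submodule R N := M • ⊤ with hSdef
    have hS : M ^ k • (⊤ : Submodule R S) = ⊥ := by
      apply Submodule.map_injective_of_injective S.injective_subtype
      rw [Submodule.map_smul'', Submodule.map_top, Submodule.range_subtype, Submodule.map_bot,
        hSdef, ← Submodule.smul_assoc, smul_eq_mul, ← pow_succ]
      exact h
    haveI : IsArtinian R S := ih S hS
    have hQ : M • (⊤ : Submodule R (N ⧸ S)) = ⊥ := by
      rw [← Submodule.range_mkQ S, ← Submodule.map_top, ← Submodule.map_smul'', ← hSdef,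
        Submodule.mkQ_map_self]
    haveI : IsArtinian R (N ⧸ S) := myArtinianOfTorsion M hM hQ
    exact isArtinian_of_range_eq_ker S.subtype S.mkQ
      (by rw [Submodule.range_subtype, Submodule.ker_mkQ])

end Akizuki


section PITcore

/-- Core of Krull's principal ideal theorem, local form: in a Noetherian local ring where the
maximal ideal is the unique prime containing `x`, there is no chain of two primes strictly
below the maximal ideal. -/
lemma pit_core {R : Type} [CommRing R] [IsNoetherianRing R] [IsLocalRing R] {x : R}
    (hx : x ∈ maximalIdeal R)
    (hmin : ∀ T : Ideal R, T.IsPrime → x ∈ T → T = maximalIdeal R)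
    {q0 q1 : Ideal R} (h0 : q0.IsPrime) (h1 : q1.IsPrime)
    (h01 : q0 < q1) (h1M : q1 < maximalIdeal R) : False := by
  haveI := h1
  set M := maximalIdeal R with hMdef
  -- x is not in q1
  have hxq1 : x ∉ q1 := fun hmem => h1M.ne (hmin q1 h1 hmem)
  -- M ^ k ≤ span {x}
  have hrad : (Ideal.span {x}).radical = M := by
    rw [Ideal.radical_eq_sInf]
    apply le_antisymm
    · exact sInf_le ⟨(Ideal.span_singleton_le_iff_mem _).2 hx, (maximalIdeal.isMaximal R).isPrime⟩
    · exact le_sInf fun J ⟨hJ1, hJ2⟩ => (hmin J hJ2 (hJ1 (Ideal.subset_span rfl))).ge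
  obtain ⟨k, hk⟩ := Ideal.exists_radical_pow_le_of_fg (Ideal.span {x}) (IsNoetherian.noetherian _)
  rw [hrad] at hk
  -- the localization at q1 and symbolic powers
  let L := Localization.AtPrime q1
  let φ := algebraMap R L
  haveI : IsNoetherianRing L := by
    exact IsLocalization.isNoetherianRing q1.primeCompl L ‹_›
  let P' : Ideal L := q1.map φ
  let J : ℕ → Ideal R := fun n => (P' ^ n).comap φ
  have hJanti : ∀ n, J (n + 1) ≤ J n :=
    fun n => Ideal.comap_mono (Ideal.pow_le_pow_right (Nat.le_succ n))
  -- primary property of symbolic powers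
  have hprim : ∀ n (a : R), a * x ∈ J n → a ∈ J n := by
    intro n a ha
    have hu : IsUnit (φ x) := IsLocalization.map_units L (⟨x, show x ∈ q1.primeCompl from hxq1⟩)
    have h2 : φ a * φ x ∈ P' ^ n := by
      rw [← map_mul]; exact ha
    have h3 : φ a = φ a * φ x * ↑hu.unit⁻¹ := by
      rw [mul_assoc, hu.mul_val_inv, mul_one]
    show φ a ∈ P' ^ n
    rw [h3]
    exact Ideal.mul_mem_right _ _ h2
  -- the quotient R ⧸ M ^ k is Artinian
  set N₀ : Submodule R R := (M ^ k : Ideal R) with hN₀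
  haveI : IsArtinian R (R ⧸ N₀) := by
    apply myArtinianOfPow M (maximalIdeal.isMaximal R) k
    rw [← Submodule.range_mkQ N₀, ← Submodule.map_top, ← Submodule.map_smul'']
    have h5 : (M ^ k : Ideal R) • (⊤ : Submodule R R) = N₀ := by
      rw [smul_eq_mul, Ideal.mul_top]
    rw [h5, Submodule.mkQ_map_self]
  -- the chain J n ⊔ (x) stabilizes
  set C : ℕ → Ideal R := fun n => J n ⊔ Ideal.span {x} with hC
  have hCanti : ∀ {i j : ℕ}, i ≤ j → C j ≤ C i := by
    intro i j hij
    have : J j ≤ J i := by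
      clear hC
      induction hij with
      | refl => exact le_rfl
      | step h ih => exact le_trans (hJanti _) ih
    exact sup_le_sup_right this _
  have hCN : ∀ n, N₀ ≤ C n := fun n => le_trans hk le_sup_right
  let F : ℕ →o (Submodule R (R ⧸ N₀))ᵒᵈ :=
    ⟨fun n => Submodule.map N₀.mkQ (C n), fun i j hij => Submodule.map_mono (hCanti hij)⟩
  obtain ⟨n, hn⟩ := IsArtinian.monotone_stabilizes F
  have hCeq : C n = C (n + 1) := by
    have h := hn (n + 1) (Nat.le_succ n)
    have h2 := congrArg (Submodule.comap N₀.mkQ) h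
    simp only [F, OrderHom.coe_mk, Submodule.comap_map_mkQ] at h2
    change Submodule.comap N₀.mkQ (Submodule.map N₀.mkQ (C n)) =
      Submodule.comap N₀.mkQ (Submodule.map N₀.mkQ (C (n + 1))) at h2
    simp only [Submodule.comap_map_mkQ] at h2
    rwa [sup_eq_right.2 (hCN n), sup_eq_right.2 (hCN (n + 1))] at h2
  -- hence J n = J (n+1) by Nakayama
  have hstep : J n ≤ J (n + 1) ⊔ (Ideal.span {x}) • J n := by
    intro y hy
    have hy2 : y ∈ J (n + 1) ⊔ Ideal.span {x} := by
      have h6 : y ∈ C n := Submodule.mem_sup_left hy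
      rw [hCeq] at h6
      exact h6
    obtain ⟨z, hz, w, hw, hyzw⟩ := Submodule.mem_sup.1 hy2
    obtain ⟨c, hcw⟩ := Ideal.mem_span_singleton'.1 hw
    have hcx : c * x ∈ J n := by
      have hzJ : z ∈ J n := hJanti n hz
      have : c * x = y - z := by rw [← hyzw, hcw]; ring
      rw [this]
      exact (J n).sub_mem hy hzJ
    have hc : c ∈ J n := hprim n c hcx
    have hw' : w ∈ (Ideal.span {x}) • J n := by
      rw [smul_eq_mul, ← hcw, mul_comm c x]
      exact Ideal.mul_mem_mul (Ideal.mem_span_singleton_self x) hc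
    rw [← hyzw]
    exact Submodule.add_mem _ (Submodule.mem_sup_left hz) (Submodule.mem_sup_right hw')
  have hxjac : Ideal.span {x} ≤ Ideal.jacobson ⊥ := by
    rw [IsLocalRing.jacobson_eq_maximalIdeal ⊥ bot_ne_top]
    exact (Ideal.span_singleton_le_iff_mem _).2 hx
  have hJeq : J n = J (n + 1) :=
    le_antisymm
      (Submodule.le_of_le_smul_of_le_jacobson_bot (IsNoetherian.noetherian _) hxjac hstep)
      (hJanti n)
  -- transfer to the localization: P' ^ n = P' ^ (n+1), hence P' ^ n = ⊥ by Nakayama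
  have hP : P' ^ n = P' ^ (n + 1) := by
    have e1 : Ideal.map φ (J n) = P' ^ n := IsLocalization.map_comap q1.primeCompl L (P' ^ n)
    have e2 : Ideal.map φ (J (n + 1)) = P' ^ (n + 1) :=
      IsLocalization.map_comap q1.primeCompl L (P' ^ (n + 1))
    rw [← e1, ← e2, hJeq]
  have hPjac : P' ≤ Ideal.jacobson (⊥ : Ideal L) := by
    rw [IsLocalRing.jacobson_eq_maximalIdeal ⊥ bot_ne_top]
    exact le_of_eq Localization.AtPrime.map_eq_maximalIdeal
  have hPbot : P' ^ n = ⊥ := by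
    apply Submodule.eq_bot_of_le_smul_of_le_jacobson_bot P' _ (IsNoetherian.noetherian _) _ hPjac
    rw [smul_eq_mul, ← pow_succ']
    exact le_of_eq hP
  -- contradiction with q0 < q1
  have hdisj : Disjoint (q1.primeCompl : Set R) (q0 : Set R) :=
    Set.disjoint_left.2 fun a ha ha0 => ha (h01.le ha0)
  have hdisj1 : Disjoint (q1.primeCompl : Set R) (q1 : Set R) :=
    Set.disjoint_left.2 fun a ha ha0 => ha ha0
  haveI hq0L : (Ideal.map φ q0).IsPrime :=
    IsLocalization.isPrime_of_isPrime_disjoint q1.primeCompl L q0 h0 hdisj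
  have hPle : P' ≤ Ideal.map φ q0 := hq0L.le_of_pow_le (hPbot ▸ bot_le)
  have h4 := Ideal.comap_mono (f := φ) hPle
  rw [show Ideal.comap φ (Ideal.map φ q1) = q1 from
      IsLocalization.comap_map_of_isPrime_disjoint q1.primeCompl L h1 hdisj1,
    show Ideal.comap φ (Ideal.map φ q0) = q0 from
      IsLocalization.comap_map_of_isPrime_disjoint q1.primeCompl L h0 hdisj] at h4
  exact h01.not_ge h4

end PITcore

lemma pit1 {R : Type} [CommRing R] [IsNoetherianRing R] {x : R} {Q q1 q0 : Ideal R}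
    (hQ : Q.IsPrime) (h1 : q1.IsPrime) (h0 : q0.IsPrime) (hxQ : x ∈ Q)
    (hmin : ∀ T : Ideal R, T.IsPrime → x ∈ T → T ≤ Q → Q ≤ T)
    (h01 : q0 < q1) (h1Q : q1 < Q) : False := by
  haveI := hQ
  let L := Localization.AtPrime Q
  let φ := algebraMap R L
  haveI : IsNoetherianRing L := IsLocalization.isNoetherianRing Q.primeCompl L ‹_›
  have hmax : Ideal.map φ Q = maximalIdeal L := Localization.AtPrime.map_eq_maximalIdeal
  -- any ideal of L contracts below Q
  have hcon : ∀ T : Ideal L, T.IsPrime → Ideal.comap φ T ≤ Q := by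
    intro T hT t ht
    by_contra htQ
    have hu : IsUnit (φ t) := IsLocalization.map_units L (⟨t, show t ∈ Q.primeCompl from htQ⟩)
    exact hT.ne_top (Ideal.eq_top_of_isUnit_mem T ht hu)
  have hdisj : ∀ {p : Ideal R}, p.IsPrime → p ≤ Q → Disjoint (Q.primeCompl : Set R) (p : Set R) :=
    fun {p} hp hpQ => Set.disjoint_left.2 fun a ha ha0 => ha (hpQ ha0)
  haveI hq0L : (Ideal.map φ q0).IsPrime :=
    IsLocalization.isPrime_of_isPrime_disjoint Q.primeCompl L q0 h0 (hdisj h0 (h01.le.trans h1Q.le))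
  haveI hq1L : (Ideal.map φ q1).IsPrime :=
    IsLocalization.isPrime_of_isPrime_disjoint Q.primeCompl L q1 h1 (hdisj h1 h1Q.le)
  have hc0 : Ideal.comap φ (Ideal.map φ q0) = q0 :=
    IsLocalization.comap_map_of_isPrime_disjoint Q.primeCompl L h0
      (hdisj h0 (h01.le.trans h1Q.le))
  have hc1 : Ideal.comap φ (Ideal.map φ q1) = q1 :=
    IsLocalization.comap_map_of_isPrime_disjoint Q.primeCompl L h1 (hdisj h1 h1Q.le)
  have hcQ : Ideal.comap φ (Ideal.map φ Q) = Q :=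
    IsLocalization.comap_map_of_isPrime_disjoint Q.primeCompl L hQ (hdisj hQ le_rfl)
  refine pit_core (x := φ x) ?_ ?_ hq0L hq1L ?_ ?_
  · rw [← hmax]; exact Ideal.mem_map_of_mem φ hxQ
  · intro T hT hxT
    have hT' : (Ideal.comap φ T).IsPrime := hT.comap φ
    have hxT' : x ∈ Ideal.comap φ T := hxT
    have hQT : Q ≤ Ideal.comap φ T := hmin _ hT' hxT' (hcon T hT)
    have : maximalIdeal L ≤ T := by
      rw [← hmax]
      exact le_trans (Ideal.map_mono hQT) (Ideal.map_comap_le)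
    exact ((maximalIdeal.isMaximal L).eq_of_le hT.ne_top this).symm
  · refine lt_of_le_of_ne (Ideal.map_mono h01.le) fun he => h01.ne ?_
    rw [← hc0, ← hc1, he]
  · rw [← hmax]
    refine lt_of_le_of_ne (Ideal.map_mono h1Q.le) fun he => h1Q.ne ?_
    rw [← hc1, he, hcQ]

section Main

variable {A : Type} [CommRing A]

lemma chain_le_dim {n : ℕ} (f : Fin (n + 1) → PrimeSpectrum A) (hf : StrictMono f) :
    (n : WithBot ℕ∞) ≤ ringKrullDim A := by
  let s : LTSeries (PrimeSpectrum A) := ⟨n, f, fun i => hf (Fin.castSucc_lt_succ (i := i))⟩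
  exact Order.LTSeries.length_le_krullDim s

/-- The main combinatorial/ring-theoretic step: two saturated chains with the same endpoints
cannot have different lengths. -/
lemma key [IsDomain A] [IsLocalRing A] [IsNoetherianRing A] [UniqueFactorizationMonoid A]
    (hdim : ringKrullDim A ≤ 3) (n m : ℕ) (f : Fin (n + 1) → PrimeSpectrum A)
    (g : Fin (m + 1) → PrimeSpectrum A) (hf : IsSaturatedChain f) (hg : IsSaturatedChain g)
    (h0 : f 0 = g 0) (hl : f (Fin.last n) = g (Fin.last m)) : ¬ n < m := by
  intro hnm
  have hgmono : StrictMono g := Fin.strictMono_iff_lt_succ.2 fun i => (hg i).1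
  have hfmono : StrictMono f := Fin.strictMono_iff_lt_succ.2 fun i => (hf i).1
  have hm3 : m ≤ 3 := by
    have h1 : (m : WithBot ℕ∞) ≤ 3 := le_trans (chain_le_dim g hgmono) hdim
    exact_mod_cast h1
  have hn0 : n ≠ 0 := by
    rintro rfl
    have hlt : (0 : Fin (m + 1)) < Fin.last m := by
      rw [Fin.lt_def]; simp only [Fin.val_zero, Fin.val_last]; omega
    have h2 : g 0 < g (Fin.last m) := hgmono hlt
    rw [← h0, ← hl, show (Fin.last 0) = (0 : Fin 1) from rfl] at h2
    exact lt_irrefl _ h2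
  -- the case of a short chain of length 1
  have short : ∀ (h1 : 1 < m + 1), ¬ (n = 1) := by
    intro h1m hn1
    subst hn1
    have cov : f 0 ⋖ f (Fin.last 1) := hf 0
    rw [h0, hl] at cov
    have c1 : g 0 < g ⟨1, h1m⟩ := hgmono (by rw [Fin.lt_def]; simp)
    have c2 : g ⟨1, h1m⟩ < g (Fin.last m) := by
      apply hgmono
      rw [Fin.lt_def]; simp only [Fin.val_last]; omega
    exact cov.2 c1 c2
  have hcase : n = 2 ∧ m = 3 := by
    rcases Nat.lt_or_ge n 2 with h | h
    · interval_cases n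
      · exact absurd rfl hn0
      · exact absurd rfl (short (by omega))
    · omega
  obtain ⟨rfl, rfl⟩ := hcase
  -- names for the primes involved
  have hl' : f 2 = g 3 := hl
  have hpa : f 0 ⋖ f 1 := hf 0
  have haq : f 1 ⋖ f 2 := hf 1
  have hpb1 : g 0 ⋖ g 1 := hg 0
  have hb12 : g 1 ⋖ g 2 := hg 1
  have hb2q : g 2 ⋖ g 3 := hg 2
  rw [h0] at hpa
  rw [hl'] at haq
  -- Step 1: g 0 is the zero ideal
  have hp : (g 0).asIdeal = ⊥ := by
    by_contra hne
    have hbot : (⟨⊥, Ideal.bot_prime⟩ : PrimeSpectrum A) < g 0 := by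
      rw [← PrimeSpectrum.asIdeal_lt_asIdeal]
      exact bot_lt_iff_ne_bot.2 hne
    let s0 : LTSeries (PrimeSpectrum A) := ⟨3, g, fun i => hgmono (Fin.castSucc_lt_succ (i := i))⟩
    have h4 := Order.LTSeries.length_le_krullDim (s0.cons ⟨⊥, Ideal.bot_prime⟩ hbot)
    have h5 : ((4 : ℕ) : WithBot ℕ∞) ≤ ringKrullDim A := h4
    have h6 : ((4 : ℕ) : WithBot ℕ∞) ≤ 3 := le_trans h5 hdim
    norm_num at h6
  -- Step 2: prime generators for the height one primes
  have hb1ne : (g 1).asIdeal ≠ ⊥ := by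
    intro hb
    exact hpb1.lt.ne (PrimeSpectrum.ext (by rw [hp, hb]))
  obtain ⟨ρ, hρ1, hρ⟩ := Ideal.IsPrime.exists_mem_prime_of_ne_bot (g 1).isPrime hb1ne
  have hane : (f 1).asIdeal ≠ ⊥ := by
    intro hb
    exact hpa.lt.ne (PrimeSpectrum.ext (by rw [hp, hb]))
  obtain ⟨π, hπ1, hπ⟩ := Ideal.IsPrime.exists_mem_prime_of_ne_bot (f 1).isPrime hane
  have hspan : ∀ (x : A), Prime x → ∀ c : PrimeSpectrum A, x ∈ c.asIdeal →
      ((g 0) ⋖ c) → c.asIdeal = Ideal.span {x} := by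
    intro x hx c hxc hcov
    have hxP : (Ideal.span {x}).IsPrime := (Ideal.span_singleton_prime hx.ne_zero).2 hx
    have h1 : g 0 < (⟨Ideal.span {x}, hxP⟩ : PrimeSpectrum A) := by
      rw [← PrimeSpectrum.asIdeal_lt_asIdeal, hp]
      exact bot_lt_iff_ne_bot.2 (by simpa [Ideal.span_singleton_eq_bot] using hx.ne_zero)
    have h2 : (⟨Ideal.span {x}, hxP⟩ : PrimeSpectrum A) ≤ c := by
      rw [← PrimeSpectrum.asIdeal_le_asIdeal]
      exact (Ideal.span_singleton_le_iff_mem _).2 hxc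
    rcases eq_or_lt_of_le h2 with he | hlt
    · rw [← he]
    · exact absurd hlt (hcov.2 h1)
  have hb1span : (g 1).asIdeal = Ideal.span {ρ} := hspan ρ hρ (g 1) hρ1 hpb1
  have haspan : (f 1).asIdeal = Ideal.span {π} := hspan π hπ (f 1) hπ1 hpa
  -- Step 3: π avoids g 2 and ρ avoids f 1
  have hπb2 : π ∉ (g 2).asIdeal := by
    intro hmem
    have hle : f 1 ≤ g 2 := by
      rw [← PrimeSpectrum.asIdeal_le_asIdeal, haspan]
      exact (Ideal.span_singleton_le_iff_mem _).2 hmem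
    rcases eq_or_lt_of_le hle with he | hlt
    · exact hpa.2 hpb1.lt (by rw [he]; exact hb12.lt)
    · exact haq.2 hlt hb2q.lt
  have hρa : ρ ∉ (f 1).asIdeal := by
    intro hmem
    have hle : g 1 ≤ f 1 := by
      rw [← PrimeSpectrum.asIdeal_le_asIdeal, hb1span]
      exact (Ideal.span_singleton_le_iff_mem _).2 hmem
    rcases eq_or_lt_of_le hle with he | hlt
    · exact haq.2 (by rw [← he]; exact hb12.lt) hb2q.lt
    · exact hpa.2 hpb1.lt hlt
  -- Step 4: g 3 is a minimal prime over (g 1) + (π)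
  have hπa : π ∈ (f 1).asIdeal := by rw [haspan]; exact Ideal.mem_span_singleton_self π
  have hπq : π ∈ (g 3).asIdeal := (PrimeSpectrum.asIdeal_le_asIdeal _ _).2 haq.lt.le hπa
  have hb1q : (g 1).asIdeal ≤ (g 3).asIdeal :=
    (PrimeSpectrum.asIdeal_le_asIdeal _ _).2 (hb12.lt.trans hb2q.lt).le
  have hIq : (g 1).asIdeal ⊔ Ideal.span {π} ≤ (g 3).asIdeal :=
    sup_le hb1q ((Ideal.span_singleton_le_iff_mem _).2 hπq)
  haveI : (g 3).asIdeal.IsPrime := (g 3).isPrime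
  obtain ⟨Q, hQmin, hQle⟩ := Ideal.exists_minimalPrimes_le hIq
  have hQprime : Q.IsPrime := hQmin.1.1
  have hIQ : (g 1).asIdeal ⊔ Ideal.span {π} ≤ Q := hQmin.1.2
  have haQ : f 1 ≤ (⟨Q, hQprime⟩ : PrimeSpectrum A) := by
    rw [← PrimeSpectrum.asIdeal_le_asIdeal, haspan]
    exact le_trans le_sup_right hIQ
  have hQq : (⟨Q, hQprime⟩ : PrimeSpectrum A) ≤ g 3 := by
    rw [← PrimeSpectrum.asIdeal_le_asIdeal]; exact hQle
  have hQeq : Q = (g 3).asIdeal := by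
    rcases eq_or_lt_of_le hQq with he | hlt
    · exact congrArg PrimeSpectrum.asIdeal he
    · rcases eq_or_lt_of_le haQ with he2 | hlt2
      · exfalso
        have h7 : (g 1).asIdeal ≤ (f 1).asIdeal := by
          have : (f 1).asIdeal = Q := congrArg PrimeSpectrum.asIdeal he2
          rw [this]
          exact le_trans le_sup_left hIQ
        exact hρa (h7 hρ1)
      · exact absurd hlt (haq.2 hlt2)
  have hqmin : (g 3).asIdeal ∈ ((g 1).asIdeal ⊔ Ideal.span {π}).minimalPrimes := hQeq ▸ hQmin
  -- Step 5: pass to the quotient by (ρ) = g 1 and apply the principal ideal theorem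
  haveI hb1P : (g 1).asIdeal.IsPrime := (g 1).isPrime
  let B := A ⧸ (g 1).asIdeal
  let mk : A →+* B := Ideal.Quotient.mk (g 1).asIdeal
  have hker : RingHom.ker mk = (g 1).asIdeal := Ideal.mk_ker
  have hsurj : Function.Surjective mk := Ideal.Quotient.mk_surjective
  haveI : ((g 3).asIdeal.map mk).IsPrime :=
    Ideal.map_isPrime_of_surjective hsurj (by rw [hker]; exact hb1q)
  haveI hb2P : (g 2).asIdeal.IsPrime := (g 2).isPrime
  have hb1b2 : (g 1).asIdeal ≤ (g 2).asIdeal :=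
    (PrimeSpectrum.asIdeal_le_asIdeal _ _).2 hb12.lt.le
  haveI : ((g 2).asIdeal.map mk).IsPrime :=
    Ideal.map_isPrime_of_surjective hsurj (by rw [hker]; exact hb1b2)
  refine pit1 (x := mk π) ‹((g 3).asIdeal.map mk).IsPrime› ‹((g 2).asIdeal.map mk).IsPrime›
    (Ideal.bot_prime) (Ideal.mem_map_of_mem mk hπq) ?_ ?_ ?_
  · -- minimality
    intro T hT hxT hTQ
    have hT' : (T.comap mk).IsPrime := hT.comap mk
    have hb1T : (g 1).asIdeal ≤ T.comap mk := by
      intro t ht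
      show mk t ∈ T
      have hz : mk t = 0 := by rwa [← RingHom.mem_ker, hker]
      rw [hz]; exact T.zero_mem
    have hsupT : (g 1).asIdeal ⊔ Ideal.span {π} ≤ T.comap mk :=
      sup_le hb1T ((Ideal.span_singleton_le_iff_mem _).2 hxT)
    have hTq : T.comap mk ≤ (g 3).asIdeal := by
      have h8 := Ideal.comap_mono (f := mk) hTQ
      rw [Ideal.comap_map_of_surjective mk hsurj] at h8
      have h9 : (g 3).asIdeal ⊔ Ideal.comap mk ⊥ = (g 3).asIdeal := by
        rw [sup_eq_left]
        intro t ht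
        have : t ∈ RingHom.ker mk := ht
        rw [hker] at this
        exact hb1q this
      rwa [h9] at h8
    have hqT : (g 3).asIdeal ≤ T.comap mk := hqmin.2 ⟨hT', hsupT⟩ hTq
    calc Ideal.map mk (g 3).asIdeal ≤ Ideal.map mk (T.comap mk) := Ideal.map_mono hqT
      _ = T := Ideal.map_comap_of_surjective mk hsurj T
  · -- ⊥ < map (g 2)
    rw [bot_lt_iff_ne_bot]
    intro hb
    rw [Ideal.map_eq_bot_iff_le_ker, hker] at hb
    exact hb12.lt.not_ge hb
  · -- map (g 2) < map (g 3)
    refine lt_of_le_of_ne (Ideal.map_mono ((PrimeSpectrum.asIdeal_le_asIdeal _ _).2 hb2q.lt.le))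
      fun he => hb2q.lt.ne ?_
    have h10 := congrArg (Ideal.comap mk) he
    rw [Ideal.comap_map_of_surjective mk hsurj, Ideal.comap_map_of_surjective mk hsurj] at h10
    have hcb : ∀ c : PrimeSpectrum A, (g 1).asIdeal ≤ c.asIdeal →
        c.asIdeal ⊔ Ideal.comap mk ⊥ = c.asIdeal := by
      intro c hc
      rw [sup_eq_left]
      intro t ht
      have : t ∈ RingHom.ker mk := ht
      rw [hker] at this
      exact hc this
    rw [hcb (g 2) hb1b2, hcb (g 3) hb1q] at h10
    exact PrimeSpectrum.ext h10

end Main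

/-- Every Noetherian local unique factorization domain of dimension at most `3` is
catenary. -/
theorem stmt14 (A : Type) [CommRing A] [IsDomain A] [IsLocalRing A] [IsNoetherianRing A]
    [UniqueFactorizationMonoid A] (hdim : ringKrullDim A ≤ 3) :
    IsCatenary A := by
  intro n m f g hf hg h0 hlast
  exact le_antisymm (not_lt.1 (key hdim m n g f hg hf h0.symm hlast.symm))
    (not_lt.1 (key hdim n m f g hf hg h0 hlast))
end

section
/- Let A be a noncatenary Noetherian local UFD and let m < dim A be the length of some saturated chain of primes from (0) to the maximal ideal. Then m > 2, and hence dim A > 3. -/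
open IsLocalRing

open IsLocalRing

section Art

variable {A : Type*} [CommRing A]

/-- A finitely generated module killed by a maximal ideal is Artinian. -/
lemma art_of_max_ann {m : Ideal A} (hm : m.IsMaximal) (M : Type*) [AddCommGroup M]
    [Module A M] [Module.Finite A M] (hann : ∀ a ∈ m, ∀ x : M, a • x = 0) :
    IsArtinian A M := by
  have htor : Module.IsTorsionBySet A M (m : Set A) := fun x a => hann a.1 a.2 x
  letI : Module (A ⧸ m) M := htor.module
  haveI : IsScalarTower A (A ⧸ m) M := htor.isScalarTower
  letI : Field (A ⧸ m) := Ideal.Quotient.field m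
  haveI : Module.Finite (A ⧸ m) M := Module.Finite.of_restrictScalars_finite A (A ⧸ m) M
  haveI hK : IsArtinian (A ⧸ m) M := by
    have h1 := isArtinian_of_fg_of_artinian (⊤ : Submodule (A ⧸ m) M)
      (Module.finite_def.mp ‹Module.Finite (A ⧸ m) M›)
    exact isArtinian_of_linearEquiv (LinearEquiv.ofTop (⊤ : Submodule (A ⧸ m) M) rfl)
  -- transfer to A
  have key : ∀ (N : Submodule A M) (k : A ⧸ m) (x : M), x ∈ N → k • x ∈ N := by
    intro N k x hx
    obtain ⟨a, rfl⟩ := Ideal.Quotient.mk_surjective k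
    have : (Ideal.Quotient.mk m a) • x = a • x := by
      rw [← Ideal.Quotient.algebraMap_eq, algebraMap_smul]
    rw [this]
    exact N.smul_mem a hx
  let F : Submodule A M → Submodule (A ⧸ m) M := fun N =>
    { carrier := N
      add_mem' := fun h1 h2 => N.add_mem h1 h2
      zero_mem' := N.zero_mem
      smul_mem' := fun k x hx => key N k x hx }
  have hF : StrictMono F := fun N N' h => by
    refine lt_of_le_of_ne (fun x hx => h.1 hx) ?_
    intro he
    apply h.ne
    ext x
    constructor
    · intro hx; exact (le_of_lt h) hx
    · intro hx
      have : x ∈ F N' := hx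
      rw [← he] at this; exact this
  exact ⟨Subrelation.wf (fun {a b} h => hF h) (InvImage.wf F (IsWellFounded.wf : WellFounded ((· < ·) : Submodule (A ⧸ m) M → _ → Prop)))⟩

/-- Quotients by powers of a maximal ideal in a Noetherian ring are Artinian modules. -/
lemma art_quot_pow [IsNoetherianRing A] {m : Ideal A} (hm : m.IsMaximal) :
    ∀ k : ℕ, IsArtinian A (A ⧸ (m ^ k : Ideal A))
  | 0 => by
    haveI : Subsingleton (A ⧸ (m ^ 0 : Ideal A)) := by
      refine Submodule.Quotient.subsingleton_iff.mpr ?_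
      rw [pow_zero, Ideal.one_eq_top]
    infer_instance
  | (k + 1) => by
    haveI ih := art_quot_pow hm k
    set N : Submodule A A := (m ^ (k + 1) : Ideal A) with hN
    set N' : Submodule A A := (m ^ k : Ideal A) with hN'
    have hle : N ≤ N' := Ideal.pow_le_pow_right (Nat.le_succ k)
    rw [isArtinian_iff_submodule_quotient (Submodule.map N.mkQ N')]
    constructor
    · -- the submodule N'/N is killed by m and f.g.
      haveI : Module.Finite A ↥(Submodule.map N.mkQ N') :=
        Module.Finite.iff_fg.mpr (IsNoetherian.noetherian _)
      refine art_of_max_ann hm _ ?_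
      rintro a ha ⟨x, hx⟩
      obtain ⟨z, hz, rfl⟩ := hx
      refine Subtype.ext ?_
      show a • N.mkQ z = 0
      rw [← map_smul]
      rw [show a • z = a * z from rfl]
      have haz : a * z ∈ N := by
        rw [hN, pow_succ, mul_comm a z]
        exact Submodule.mul_mem_mul hz ha
      exact (Submodule.Quotient.mk_eq_zero N).mpr haz
    · exact isArtinian_of_linearEquiv
        (Submodule.quotientQuotientEquivQuotient N N' hle).symm

end Art

section PIT

/-- Core local case of Krull's principal ideal theorem: if the maximal ideal of a
Noetherian local ring is the unique prime containing `x`, then for any prime `q`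
strictly below the maximal ideal and any prime `r ≤ q`, we have `q ≤ r`. -/
lemma pit_local {A : Type} [CommRing A] [IsNoetherianRing A] [IsLocalRing A] {x : A}
    (hx : x ∈ maximalIdeal A)
    (huniq : ∀ P : Ideal A, P.IsPrime → x ∈ P → P = maximalIdeal A)
    {q : Ideal A} (hq : q.IsPrime) (hqm : q < maximalIdeal A)
    {r : Ideal A} (hr : r.IsPrime) (hrq : r ≤ q) : q ≤ r := by
  haveI := hq
  set S := Localization.AtPrime q with hS
  set φ := algebraMap A S with hφ
  haveI : IsNoetherianRing S := IsLocalization.isNoetherianRing q.primeCompl S ‹_›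
  set M : Ideal S := maximalIdeal S with hM
  have hmap : q.map φ = M := Localization.AtPrime.map_eq_maximalIdeal
  have hxq : x ∉ q := fun h => (ne_of_lt hqm) (huniq q hq h)
  set sp : ℕ → Ideal A := fun n => (M ^ n).comap φ with hspdef
  have hsp : ∀ n, sp (n + 1) ≤ sp n := fun n =>
    Ideal.comap_mono (Ideal.pow_le_pow_right (Nat.le_succ n))
  -- the radical of (x) is the maximal ideal
  have hrad : (Ideal.span {x}).radical = maximalIdeal A := by
    rw [Ideal.radical_eq_sInf]
    apply le_antisymm
    · exact sInf_le ⟨(Ideal.span_singleton_le_iff_mem _).mpr hx, inferInstance⟩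
    · exact le_sInf fun J hJ =>
        (huniq J hJ.2 (hJ.1 (Ideal.subset_span rfl))).ge
  obtain ⟨k, hk⟩ := Ideal.exists_radical_pow_le_of_fg (Ideal.span {x})
    (IsNoetherian.noetherian _)
  rw [hrad] at hk
  set c : ℕ → Ideal A := fun n => sp n ⊔ Ideal.span {x} with hcdef
  have hcanti : ∀ {a b : ℕ}, a ≤ b → c b ≤ c a := fun {a b} hab =>
    antitone_nat_of_succ_le (fun n => sup_le_sup_right (hsp n) _) hab
  have hck : ∀ n, (maximalIdeal A) ^ k ≤ c n := fun n => hk.trans le_sup_right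
  -- stabilization of the chain `c` using Artinian-ness of A/m^k
  haveI := art_quot_pow (IsLocalRing.maximalIdeal.isMaximal A) k
  obtain ⟨n, hn⟩ := IsArtinian.monotone_stabilizes
    (⟨fun n => Submodule.map (Submodule.mkQ ((maximalIdeal A) ^ k : Ideal A)) (c n),
      fun a b hab => Submodule.map_mono (hcanti hab)⟩ :
      ℕ →o (Submodule A (A ⧸ ((maximalIdeal A) ^ k : Ideal A)))ᵒᵈ)
  have hcn : c n = c (n + 1) := by
    have h1 : Submodule.map (Submodule.mkQ ((maximalIdeal A) ^ k : Ideal A)) (c n)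
        = Submodule.map (Submodule.mkQ ((maximalIdeal A) ^ k : Ideal A)) (c (n + 1)) :=
      hn (n + 1) (Nat.le_succ n)
    have h2 := congrArg
      (Submodule.comap (Submodule.mkQ ((maximalIdeal A) ^ k : Ideal A))) h1
    simp only [Submodule.comap_map_mkQ] at h2
    rwa [sup_eq_right.mpr (hck n), sup_eq_right.mpr (hck (n + 1))] at h2
  -- key inclusion for Nakayama
  have key : sp n ≤ sp (n + 1) ⊔ Ideal.span {x} • sp n := by
    intro a ha
    have hac : a ∈ c (n + 1) := by rw [← hcn]; exact Submodule.mem_sup_left ha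
    obtain ⟨b, hb, w, hw, heq⟩ := Submodule.mem_sup.mp hac
    obtain ⟨d, rfl⟩ := Ideal.mem_span_singleton'.mp hw
    have hdx : d * x ∈ sp n := by
      have h3 : a - b ∈ sp n := sub_mem ha (hsp n hb)
      rwa [← heq, add_sub_cancel_left] at h3
    have hd : d ∈ sp n := by
      have hu : IsUnit (φ x) := IsLocalization.map_units S (⟨x, hxq⟩ : q.primeCompl)
      obtain ⟨u, hu'⟩ := hu
      show φ d ∈ M ^ n
      have h4 : φ d = φ (d * x) * ↑u⁻¹ := by
        rw [map_mul, ← hu', mul_assoc, Units.mul_inv, mul_one]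
      rw [h4]
      exact Ideal.mul_mem_right _ _ hdx
    have : d * x ∈ Ideal.span {x} • sp n := by
      rw [mul_comm]
      exact Submodule.smul_mem_smul (Ideal.subset_span rfl) hd
    rw [← heq]
    exact Submodule.add_mem_sup hb this
  have hjac : Ideal.span {x} ≤ Ideal.jacobson ⊥ := by
    rw [IsLocalRing.jacobson_eq_maximalIdeal ⊥ bot_ne_top]
    exact (Ideal.span_singleton_le_iff_mem _).mpr hx
  have spn_eq : sp n = sp (n + 1) :=
    le_antisymm (Submodule.le_of_le_smul_of_le_jacobson_bot
      (IsNoetherian.noetherian _) hjac key) (hsp n)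
  have hMn : M ^ n = M ^ (n + 1) := by
    have h1 := congrArg (Ideal.map φ) spn_eq
    rwa [IsLocalization.map_comap q.primeCompl S,
      IsLocalization.map_comap q.primeCompl S] at h1
  have hbot : M ^ n = ⊥ := by
    refine Submodule.eq_bot_of_le_smul_of_le_jacobson_bot M (M ^ n)
      (IsNoetherian.noetherian _) ?_ ?_
    · rw [smul_eq_mul, ← pow_succ']
      exact hMn.le
    · rw [IsLocalRing.jacobson_eq_maximalIdeal ⊥ bot_ne_top]
  intro z hz
  have hzM : φ z ∈ M := by rw [← hmap]; exact Ideal.mem_map_of_mem φ hz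
  have hzn : φ (z ^ n) ∈ M ^ n := by rw [map_pow]; exact Ideal.pow_mem_pow hzM n
  rw [hbot, Ideal.mem_bot] at hzn
  obtain ⟨s, hs⟩ := (IsLocalization.map_eq_zero_iff q.primeCompl S _).mp hzn
  have h0r : (s : A) * z ^ n ∈ r := by rw [hs]; exact r.zero_mem
  have hznr : z ^ n ∈ r :=
    (hr.mem_or_mem h0r).resolve_left (fun hsr => s.2 (hrq hsr))
  exact hr.mem_of_pow_mem n hznr

end PIT

/-- Krull's principal ideal theorem (downward form): a prime strictly below a
minimal prime of a principal ideal is a minimal prime of the ring. -/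
lemma pit {R : Type} [CommRing R] [IsNoetherianRing R] {x : R} {p : Ideal R}
    (hp : p ∈ (Ideal.span {x}).minimalPrimes) {q : Ideal R} (hq : q.IsPrime) (hqp : q < p) :
    q ∈ minimalPrimes R := by
  haveI hpp : p.IsPrime := hp.1.1
  set S := Localization.AtPrime p with hSdef
  set φ := algebraMap R S with hφdef
  haveI : IsNoetherianRing S := IsLocalization.isNoetherianRing p.primeCompl S ‹_›
  have hdisj : ∀ {I : Ideal R}, I ≤ p → Disjoint (p.primeCompl : Set R) I :=
    fun {I} hIp => Set.disjoint_left.mpr (fun {a} ha hai => ha (hIp hai))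
  have hmax : p.map φ = maximalIdeal S := Localization.AtPrime.map_eq_maximalIdeal
  have hxp : x ∈ p := hp.1.2 (Ideal.subset_span rfl)
  have huniq : ∀ P : Ideal S, P.IsPrime → φ x ∈ P → P = maximalIdeal S := by
    intro P hP hxP
    have hPc : (P.comap φ).IsPrime := hP.comap φ
    have hle : P.comap φ ≤ p := by
      intro a hap
      by_contra hnot
      have hu := IsLocalization.map_units S (⟨a, hnot⟩ : p.primeCompl)
      exact hP.ne_top (P.eq_top_of_isUnit_mem hap hu)
    have hx' : x ∈ P.comap φ := Ideal.mem_comap.mpr hxP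
    have hPeq : P.comap φ = p :=
      le_antisymm hle (hp.2 ⟨hPc, (Ideal.span_singleton_le_iff_mem _).mpr hx'⟩ hle)
    calc P = (P.comap φ).map φ := (IsLocalization.map_comap p.primeCompl S P).symm
      _ = p.map φ := by rw [hPeq]
      _ = maximalIdeal S := hmax
  have hxm : φ x ∈ maximalIdeal S := by rw [← hmax]; exact Ideal.mem_map_of_mem φ hxp
  have hq' : (q.map φ).IsPrime :=
    IsLocalization.isPrime_of_isPrime_disjoint p.primeCompl S q hq (hdisj hqp.le)
  have hcomapq : (q.map φ).comap φ = q :=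
    IsLocalization.comap_map_of_isPrime_disjoint p.primeCompl S hq (hdisj hqp.le)
  have hqm' : q.map φ < maximalIdeal S := by
    refine lt_of_le_of_ne ?_ ?_
    · rw [← hmax]; exact Ideal.map_mono hqp.le
    · intro he
      have := congrArg (Ideal.comap φ) he
      rw [hcomapq, show Ideal.comap φ (maximalIdeal S) = p from Localization.AtPrime.comap_maximalIdeal] at this
      exact hqp.ne this
  refine ⟨⟨hq, bot_le⟩, ?_⟩
  intro b hb hbq
  have hbp : b ≤ p := hbq.trans hqp.le
  have hb' : (b.map φ).IsPrime :=
    IsLocalization.isPrime_of_isPrime_disjoint p.primeCompl S b hb.1 (hdisj hbp)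
  have hcomapb : (b.map φ).comap φ = b :=
    IsLocalization.comap_map_of_isPrime_disjoint p.primeCompl S hb.1 (hdisj hbp)
  have hle' : q.map φ ≤ b.map φ :=
    pit_local hxm huniq hq' hqm' hb' (Ideal.map_mono hbq)
  calc q = (q.map φ).comap φ := hcomapq.symm
    _ ≤ (b.map φ).comap φ := Ideal.comap_mono hle'
    _ = b := hcomapb

/-- If the maximal ideal of a Noetherian local ring is minimal over `(x, y)`, and `Q` is a
prime strictly below it with no prime strictly between, and `x ∉ Q`, then `Q` is minimal
over some principal ideal. -/
lemma step2 {A : Type} [CommRing A] [IsNoetherianRing A] [IsLocalRing A]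
    {x y : A} (hmin : maximalIdeal A ∈ (Ideal.span {x, y}).minimalPrimes)
    {Q : Ideal A} (hQ : Q.IsPrime) (hQm : Q < maximalIdeal A)
    (hsat : ∀ P : Ideal A, P.IsPrime → Q < P → P = maximalIdeal A)
    (hx : x ∉ Q) :
    ∃ z, Q ∈ (Ideal.span {z}).minimalPrimes := by
  have hxym : Ideal.span {x, y} ≤ maximalIdeal A := hmin.1.2
  have hxm : x ∈ maximalIdeal A := hxym (Ideal.subset_span (by simp))
  have hym : y ∈ maximalIdeal A := hxym (Ideal.subset_span (by simp))
  have hrad : (Q ⊔ Ideal.span {x}).radical = maximalIdeal A := by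
    rw [Ideal.radical_eq_sInf]
    apply le_antisymm
    · exact sInf_le ⟨sup_le hQm.le ((Ideal.span_singleton_le_iff_mem _).mpr hxm),
        inferInstance⟩
    · refine le_sInf fun J hJ => ?_
      have hxJ : x ∈ J := hJ.1 (Submodule.mem_sup_right (Ideal.subset_span rfl))
      have hQJ : Q < J := lt_of_le_of_ne (le_sup_left.trans hJ.1)
        (fun he => hx (he ▸ hxJ))
      exact (hsat J hJ.2 hQJ).ge
  obtain ⟨k, hk⟩ := Ideal.exists_radical_pow_le_of_fg (Q ⊔ Ideal.span {x})
    (IsNoetherian.noetherian _)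
  rw [hrad] at hk
  have hyk : y ^ k ∈ Q ⊔ Ideal.span {x} := hk (Ideal.pow_mem_pow hym k)
  obtain ⟨zq, hzq, w, hw, heq⟩ := Submodule.mem_sup.mp hyk
  obtain ⟨cc, rfl⟩ := Ideal.mem_span_singleton'.mp hw
  refine ⟨zq, ?_⟩
  set I := Ideal.span {zq} with hIdef
  have hIQ : I ≤ Q := (Ideal.span_singleton_le_iff_mem _).mpr hzq
  set π := Ideal.Quotient.mk I with hπdef
  have hker : RingHom.ker π = I := Ideal.mk_ker
  have hsurj : Function.Surjective π := Ideal.Quotient.mk_surjective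
  have hprime_eq : ∀ P : Ideal A, P.IsPrime → zq ∈ P → x ∈ P →
      P = maximalIdeal A := by
    intro P hP hz hxP
    have hyP : y ∈ P := hP.mem_of_pow_mem k
      (by rw [← heq]; exact add_mem hz (P.mul_mem_left _ hxP))
    have hspanP : Ideal.span {x, y} ≤ P := by
      rw [Ideal.span_le, Set.insert_subset_iff]
      exact ⟨hxP, by simpa using hyP⟩
    have hPle : P ≤ maximalIdeal A := IsLocalRing.le_maximalIdeal hP.ne_top
    exact le_antisymm hPle (hmin.2 ⟨hP, hspanP⟩ hPle)
  have hcomap_bot : Ideal.comap π (⊥ : Ideal (A ⧸ I)) = I := hker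
  have hmB : (maximalIdeal A).map π ∈ (Ideal.span {π x}).minimalPrimes := by
    refine ⟨⟨Ideal.map_isPrime_of_surjective hsurj
      (by rw [hker]; exact hIQ.trans hQm.le), ?_⟩, ?_⟩
    · rw [Ideal.span_le, Set.singleton_subset_iff]
      exact Ideal.mem_map_of_mem π hxm
    · rintro J ⟨hJp, hJx⟩ hJle
      haveI := hJp
      have hcom : (J.comap π).IsPrime := hJp.comap π
      have hzc : zq ∈ J.comap π := by
        rw [Ideal.mem_comap]
        have : π zq = 0 := Ideal.Quotient.eq_zero_iff_mem.mpr (Ideal.subset_span rfl)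
        rw [this]; exact J.zero_mem
      have hxc : x ∈ J.comap π := hJx (Ideal.subset_span rfl)
      have hJeq := hprime_eq (J.comap π) hcom hzc hxc
      have : (maximalIdeal A).map π = J := by
        rw [← hJeq, Ideal.map_comap_of_surjective π hsurj J]
      exact this.le
  haveI hQB : (Q.map π).IsPrime :=
    Ideal.map_isPrime_of_surjective hsurj (by rw [hker]; exact hIQ)
  have hcomQ : (Q.map π).comap π = Q := by
    rw [Ideal.comap_map_of_surjective π hsurj, hcomap_bot, sup_eq_left.mpr hIQ]
  have hcomM : ((maximalIdeal A).map π).comap π = maximalIdeal A := by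
    rw [Ideal.comap_map_of_surjective π hsurj, hcomap_bot,
      sup_eq_left.mpr (hIQ.trans hQm.le)]
  have hlt : Q.map π < (maximalIdeal A).map π :=
    lt_of_le_of_ne (Ideal.map_mono hQm.le)
      (fun he => hQm.ne (by rw [← hcomQ, he, hcomM]))
  have hQmin : Q.map π ∈ minimalPrimes (A ⧸ I) := pit hmB hQB hlt
  refine ⟨⟨hQ, hIQ⟩, ?_⟩
  rintro b ⟨hbp, hbI⟩ hbQ
  haveI := hbp
  have hbB : (b.map π).IsPrime :=
    Ideal.map_isPrime_of_surjective hsurj (by rw [hker]; exact hbI)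
  have hcomb : (b.map π).comap π = b := by
    rw [Ideal.comap_map_of_surjective π hsurj, hcomap_bot, sup_eq_left.mpr hbI]
  have hle2 : Q.map π ≤ b.map π := hQmin.2 ⟨hbB, bot_le⟩ (Ideal.map_mono hbQ)
  calc Q = (Q.map π).comap π := hcomQ.symm
    _ ≤ (b.map π).comap π := Ideal.comap_mono hle2
    _ = b := hcomb

/-- In a Noetherian local domain whose maximal ideal is minimal over an ideal generated
by two elements, there is no chain of three primes strictly below the maximal ideal. -/
lemma step3 {A : Type} [CommRing A] [IsDomain A] [IsNoetherianRing A] [IsLocalRing A]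
    {x y : A} (hmin : maximalIdeal A ∈ (Ideal.span {x, y}).minimalPrimes)
    {q0 q1 q2 : Ideal A} (h0 : q0.IsPrime) (h1 : q1.IsPrime) (h2 : q2.IsPrime)
    (h01 : q0 < q1) (h12 : q1 < q2) (h2m : q2 < maximalIdeal A) : False := by
  set S : Set (Ideal A) := {P | P.IsPrime ∧ q1 < P ∧ P < maximalIdeal A} with hSdef
  obtain ⟨Q, hQmem, hQmax⟩ :=
    (set_has_maximal_iff_noetherian.mpr (inferInstance : IsNoetherian A A)) S
      ⟨q2, h2, h12, h2m⟩
  obtain ⟨hQp, hq1Q, hQm⟩ := hQmem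
  have hQsat : ∀ P : Ideal A, P.IsPrime → Q < P → P = maximalIdeal A := by
    intro P hP hQP
    have hPle : P ≤ maximalIdeal A := IsLocalRing.le_maximalIdeal hP.ne_top
    rcases lt_or_eq_of_le hPle with hlt | he
    · exact absurd hQP (hQmax P ⟨hP, hq1Q.trans hQP, hlt⟩)
    · exact he
  have hxy : x ∉ Q ∨ y ∉ Q := by
    by_contra hcon
    push_neg at hcon
    have hle : Ideal.span {x, y} ≤ Q := by
      rw [Ideal.span_le, Set.insert_subset_iff]
      exact ⟨hcon.1, by simpa using hcon.2⟩
    exact absurd (hmin.2 ⟨hQp, hle⟩ hQm.le) (fun hcon2 => (lt_irrefl _ (lt_of_le_of_lt hcon2 hQm)))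
  have hz : ∃ z, Q ∈ (Ideal.span {z}).minimalPrimes := by
    rcases hxy with hx | hy
    · exact step2 hmin hQp hQm hQsat hx
    · refine step2 (x := y) (y := x) ?_ hQp hQm hQsat hy
      rwa [Set.pair_comm y x]
  obtain ⟨z, hzmin⟩ := hz
  have hmin1 : q1 ∈ minimalPrimes A := pit hzmin h1 hq1Q
  have hbot : q1 ≤ ⊥ := hmin1.2 ⟨Ideal.bot_prime, bot_le⟩ bot_le
  exact absurd (h01.trans_le hbot) (not_lt_bot)

/-- Let `A` be a noncatenary Noetherian local UFD and `m < dim A` the length of some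
saturated chain of primes from `(0)` to the maximal ideal.  Then `m > 2` and
`dim A > 3`. -/
theorem stmt16 (A : Type) [CommRing A] [IsDomain A] [IsLocalRing A] [IsNoetherianRing A]
    [UniqueFactorizationMonoid A] (hnoncat : ¬ IsCatenary A)
    (m : ℕ) (f : Fin (m + 1) → PrimeSpectrum A)
    (hsat : IsSaturatedChain f) (h0 : f 0 = ⟨⊥, Ideal.bot_prime⟩)
    (hlast : (f (Fin.last m)).asIdeal = maximalIdeal A)
    (hm : (m : WithBot ℕ∞) < ringKrullDim A) :
    2 < m ∧ 3 < ringKrullDim A := by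
  have hchain : ∃ p : LTSeries (PrimeSpectrum A), m < p.length := by
    rw [ringKrullDim, Order.krullDim] at hm
    obtain ⟨p, hp⟩ := lt_iSup_iff.mp hm
    exact ⟨p, by exact_mod_cast hp⟩
  obtain ⟨p, hp⟩ := hchain
  have h2m : 2 < m := by
    by_contra hnot
    push_neg at hnot
    interval_cases m
    · -- m = 0 : the zero ideal is maximal, so A is a field
      have hbot : maximalIdeal A = ⊥ := by
        rw [← hlast, show (Fin.last 0) = 0 from rfl, h0]
      have : ringKrullDim A = 0 :=
        ringKrullDim_eq_zero_of_isField (IsLocalRing.isField_iff_maximalIdeal_eq.mpr hbot)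
      rw [this] at hm
      simp at hm
    · -- m = 1
      have hcov : f 0 ⋖ f 1 := by
        have := hsat 0
        simpa using this
      have h3 : 2 < p.length + 1 := by omega
      set a1 : PrimeSpectrum A := p ⟨1, by omega⟩ with ha1
      set a2 : PrimeSpectrum A := p ⟨2, by omega⟩ with ha2
      have h01' : p ⟨0, by omega⟩ < a1 := p.strictMono (by simp [Fin.lt_def])
      have h12' : a1 < a2 := p.strictMono (by simp [Fin.lt_def])
      have hlt1 : f 0 < a1 := by
        rw [h0]
        exact lt_of_le_of_lt (bot_le : (⊥ : PrimeSpectrum A) ≤ _) h01'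
      have hlt2 : a1 < f 1 := by
        refine lt_of_lt_of_le h12' ?_
        rw [← PrimeSpectrum.asIdeal_le_asIdeal,
          show f 1 = f (Fin.last 1) from rfl, hlast]
        exact IsLocalRing.le_maximalIdeal a2.isPrime.ne_top
      exact hcov.2 hlt1 hlt2
    · -- m = 2
      have hcov1 : f 0 ⋖ f 1 := by simpa using hsat 0
      have hcov2 : f 1 ⋖ f 2 := by
        have := hsat 1
        simpa [show ((1 : Fin 2).castSucc) = 1 from rfl,
          show ((1 : Fin 2).succ) = 2 from rfl] using this
      -- f 1 is a height-one prime, hence principal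
      have hb : f 0 = (⊥ : PrimeSpectrum A) := h0
      have hbotcov : (⊥ : PrimeSpectrum A) < f 1 := by
        rw [← hb]; exact hcov1.1
      have hne : (f 1).asIdeal ≠ ⊥ := by
        intro he
        apply hbotcov.ne
        apply PrimeSpectrum.ext
        exact he.symm
      obtain ⟨x, hxI, hxp⟩ := (f 1).isPrime.exists_mem_prime_of_ne_bot hne
      have hsp : (Ideal.span {x}).IsPrime :=
        (Ideal.span_singleton_prime hxp.ne_zero).mpr hxp
      have hspan : Ideal.span {x} = (f 1).asIdeal := by
        have hlt : (⊥ : PrimeSpectrum A) < ⟨Ideal.span {x}, hsp⟩ := by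
          rw [← PrimeSpectrum.asIdeal_lt_asIdeal]
          exact bot_lt_iff_ne_bot.mpr (by simp [Ideal.span_singleton_eq_bot, hxp.ne_zero])
        have hle : (⟨Ideal.span {x}, hsp⟩ : PrimeSpectrum A) ≤ f 1 := by
          rw [← PrimeSpectrum.asIdeal_le_asIdeal]
          exact (Ideal.span_singleton_le_iff_mem _).mpr hxI
        rcases hle.lt_or_eq with hlt2 | he
        · rw [← hb] at hlt
          exact absurd hlt2 (hcov1.2 hlt)
        · exact congrArg PrimeSpectrum.asIdeal he
      -- choose y in the maximal ideal not in f 1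
      have hf12 : (f 1).asIdeal < (f 2).asIdeal := hcov2.1
      obtain ⟨y, hy2, hy1⟩ := SetLike.exists_of_lt hf12
      have hmax2 : (f 2).asIdeal = maximalIdeal A := by
        rw [← hlast]; rfl
      have hminmax : maximalIdeal A ∈ (Ideal.span {x, y}).minimalPrimes := by
        refine ⟨⟨inferInstance, ?_⟩, ?_⟩
        · rw [Ideal.span_le, Set.insert_subset_iff]
          constructor
          · rw [← hmax2]; exact hcov2.1.le hxI
          · rw [Set.singleton_subset_iff, ← hmax2]; exact hy2
        · rintro P ⟨hPp, hPxy⟩ hPle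
          have hxP : x ∈ P := hPxy (Ideal.subset_span (by simp))
          have hyP : y ∈ P := hPxy (Ideal.subset_span (by simp))
          have hf1P : (f 1).asIdeal ≤ P := by
            rw [← hspan]; exact (Ideal.span_singleton_le_iff_mem _).mpr hxP
          have hf1Plt : f 1 < (⟨P, hPp⟩ : PrimeSpectrum A) := by
            rw [← PrimeSpectrum.asIdeal_lt_asIdeal]
            exact lt_of_le_of_ne hf1P (fun he => hy1 (he ▸ hyP))
          have hPle2 : (⟨P, hPp⟩ : PrimeSpectrum A) ≤ f 2 := by
            rw [← PrimeSpectrum.asIdeal_le_asIdeal, hmax2]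
            exact hPle
          have : (⟨P, hPp⟩ : PrimeSpectrum A) = f 2 :=
            hPle2.lt_or_eq.resolve_left (hcov2.2 hf1Plt)
          rw [← hmax2]
          exact le_of_eq (congrArg PrimeSpectrum.asIdeal this).symm
      -- extract a chain of length 3 below the maximal ideal
      set a0 : PrimeSpectrum A := p ⟨0, by omega⟩ with ha0
      set a1 : PrimeSpectrum A := p ⟨1, by omega⟩ with ha1
      set a2 : PrimeSpectrum A := p ⟨2, by omega⟩ with ha2
      set a3 : PrimeSpectrum A := p ⟨3, by omega⟩ with ha3
      have h01' : a0 < a1 := p.strictMono (by simp [Fin.lt_def])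
      have h12' : a1 < a2 := p.strictMono (by simp [Fin.lt_def])
      have h23' : a2 < a3 := p.strictMono (by simp [Fin.lt_def])
      have h3le : a3.asIdeal ≤ maximalIdeal A :=
        IsLocalRing.le_maximalIdeal a3.isPrime.ne_top
      rcases h3le.lt_or_eq with h3lt | h3eq
      · exact step3 hminmax a1.isPrime a2.isPrime a3.isPrime h12' h23' h3lt
      · refine step3 hminmax a0.isPrime a1.isPrime a2.isPrime h01' h12' ?_
        rw [← h3eq]
        exact h23'
  refine ⟨h2m, ?_⟩
  refine lt_of_le_of_lt ?_ hm
  exact_mod_cast (show (3 : ℕ) ≤ m by omega)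
end
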